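/- The natural density of the set of squarefree positive integers equals 6/π², i.e. equals 1/ζ(2). -/

import Mathlib

open Filter

section aux
open ArithmeticFunction Finset
open scoped ArithmeticFunction.Moebius ArithmeticFunction.zeta

-- per-n indicator lemma
lemma indic (n : ℕ) (hn : n ≠ 0) :
    ∑ d ∈ (Finset.Icc 1 n).filter (fun d => d ^ 2 ∣ n), μ d
      = if Squarefree n then 1 else 0 := by
  obtain ⟨a, k, hak, ha⟩ := Nat.sq_mul_squarefree n
  have hk : k ≠ 0 := by rintro rfl; simp at hak; omega
  have ha0 : a ≠ 0 := by rintro rfl; simp at hak; omega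
  have hset : (Finset.Icc 1 n).filter (fun d => d ^ 2 ∣ n) = k.divisors := by
    ext d
    simp only [Finset.mem_filter, Finset.mem_Icc, Nat.mem_divisors]
    constructor
    · rintro ⟨⟨h1, h2⟩, hdvd⟩
      refine ⟨?_, hk⟩
      have hd0 : d ≠ 0 := by omega
      rw [← Nat.factorization_le_iff_dvd hd0 hk]
      intro p
      have h2' : (d ^ 2).factorization ≤ n.factorization :=
        (Nat.factorization_le_iff_dvd (by positivity) hn).mpr hdvd
      have := h2' p
      rw [← hak] at this
      rw [Nat.factorization_mul (by positivity) ha0, Nat.factorization_pow,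
        Nat.factorization_pow] at this
      have hale : a.factorization p ≤ 1 := by
        have := (Nat.squarefree_iff_factorization_le_one ha0).mp ha p
        exact this
      simp only [Finsupp.coe_add, Finsupp.coe_smul, Pi.add_apply, Pi.smul_apply,
        smul_eq_mul] at this
      omega
    · rintro ⟨hdk, -⟩
      have hd0 : d ≠ 0 := by rintro rfl; exact hk (Nat.eq_zero_of_zero_dvd hdk)
      refine ⟨⟨by omega, Nat.le_of_dvd (Nat.pos_of_ne_zero hn) ?_⟩, ?_⟩
      · exact dvd_trans hdk ⟨k * a, by rw [← hak]; ring⟩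
      · exact dvd_trans (pow_dvd_pow_of_dvd hdk 2) ⟨a, by rw [← hak]⟩
  rw [hset]
  have hsum : ∑ d ∈ k.divisors, μ d = (μ * (ζ : ArithmeticFunction ℤ)) k := by
    rw [coe_mul_zeta_apply]
  rw [hsum, moebius_mul_coe_zeta]
  have hiff : Squarefree n ↔ k = 1 := by
    constructor
    · intro hs
      have : k * k ∣ n := ⟨a, by rw [← hak]; ring⟩
      exact Nat.isUnit_iff.mp (hs k this)
    · rintro rfl; rw [← hak]; simpa using ha
  rw [one_apply]
  by_cases h : Squarefree n
  · rw [if_pos h, if_pos (hiff.mp h)]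
  · rw [if_neg h, if_neg (fun hk1 => h (hiff.mpr hk1))]

lemma count_eq (N : ℕ) :
    (((Finset.Icc 1 N).filter Squarefree).card : ℤ)
      = ∑ d ∈ Finset.Icc 1 N, μ d * ((N / d ^ 2 : ℕ) : ℤ) := by
  have hdiv : ∀ d : ℕ, ((Finset.Icc 1 N).filter (fun n => d ^ 2 ∣ n)).card = N / d ^ 2 := by
    intro d
    have : Finset.Icc 1 N = Finset.Ioc 0 N := by rfl
    rw [this]
    exact Nat.Ioc_filter_dvd_card_eq_div N (d ^ 2)
  calc (((Finset.Icc 1 N).filter Squarefree).card : ℤ)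
      = ∑ n ∈ Finset.Icc 1 N, if Squarefree n then 1 else 0 := by
        rw [Finset.card_filter]; push_cast; rfl
    _ = ∑ n ∈ Finset.Icc 1 N, ∑ d ∈ (Finset.Icc 1 n).filter (fun d => d ^ 2 ∣ n), μ d := by
        refine Finset.sum_congr rfl fun n hn => ?_
        rw [indic n (by simp at hn; omega)]
    _ = ∑ n ∈ Finset.Icc 1 N, ∑ d ∈ (Finset.Icc 1 N).filter (fun d => d ^ 2 ∣ n), μ d := by
        refine Finset.sum_congr rfl fun n hn => Finset.sum_congr ?_ fun _ _ => rfl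
        simp only [Finset.mem_Icc] at hn
        ext d
        simp only [Finset.mem_filter, Finset.mem_Icc]
        constructor
        · rintro ⟨⟨h1, h2⟩, h3⟩; exact ⟨⟨h1, h2.trans hn.2⟩, h3⟩
        · rintro ⟨⟨h1, h2⟩, h3⟩
          have hdn : d ∣ n := dvd_trans (dvd_pow_self d two_ne_zero) h3
          exact ⟨⟨h1, Nat.le_of_dvd (by omega) hdn⟩, h3⟩
    _ = ∑ d ∈ Finset.Icc 1 N, ∑ n ∈ (Finset.Icc 1 N).filter (fun n => d ^ 2 ∣ n), μ d := by
        simp_rw [Finset.sum_filter]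
        exact Finset.sum_comm
    _ = ∑ d ∈ Finset.Icc 1 N, μ d * ((N / d ^ 2 : ℕ) : ℤ) := by
        refine Finset.sum_congr rfl fun d _ => ?_
        rw [Finset.sum_const, hdiv d, nsmul_eq_mul, mul_comm]

lemma mu_hasSum : HasSum (fun d : ℕ => (μ d : ℝ) / (d : ℝ) ^ 2) (6 / Real.pi ^ 2) := by
  have h2 : (1 : ℝ) < (2 : ℂ).re := by norm_num
  have hsummable : LSeriesSummable (fun n => (μ n : ℂ)) 2 :=
    ArithmeticFunction.LSeriesSummable_moebius_iff.mpr h2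
  have hz : LSeries (fun n => ((ζ n : ℂ))) 2 * LSeries (fun n => (μ n : ℂ)) 2 = 1 :=
    LSeries_zeta_mul_Lseries_moebius h2
  have hzeta : LSeries (fun n => ((ζ n : ℂ))) 2 = riemannZeta 2 :=
    LSeries_zeta_eq_riemannZeta h2
  have hpi : (Real.pi : ℂ) ≠ 0 := by
    exact_mod_cast Real.pi_ne_zero
  have hval : LSeries (fun n => (μ n : ℂ)) 2 = ((6 / Real.pi ^ 2 : ℝ) : ℂ) := by
    rw [hzeta, riemannZeta_two] at hz
    push_cast
    field_simp at hz ⊢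
    linear_combination hz
  have hsum : HasSum (LSeries.term (fun n => (μ n : ℂ)) 2) (((6 / Real.pi ^ 2 : ℝ) : ℂ)) := by
    rw [← hval]; exact hsummable.hasSum
  have hterm : ∀ n : ℕ, LSeries.term (fun n => (μ n : ℂ)) 2 n
      = (((μ n : ℝ) / (n : ℝ) ^ 2 : ℝ) : ℂ) := by
    intro n
    rcases eq_or_ne n 0 with rfl | hn
    · simp [LSeries.term]
    · rw [LSeries.term_of_ne_zero hn]
      have : (n : ℂ) ^ (2 : ℂ) = ((n : ℝ) : ℂ) ^ (2 : ℕ) := by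
        rw [show (2 : ℂ) = ((2 : ℕ) : ℂ) by norm_num, Complex.cpow_natCast]
        norm_num
      rw [this]
      push_cast
      ring
  rw [← Complex.hasSum_ofReal]
  have : LSeries.term (fun n => (μ n : ℂ)) 2 = fun n => (((μ n : ℝ) / (n : ℝ) ^ 2 : ℝ) : ℂ) :=
    funext hterm
  rw [this] at hsum
  exact hsum
theorem stmt_9 :
    Tendsto (fun N : ℕ => (((Finset.Icc 1 N).filter Squarefree).card : ℝ) / N)
      atTop (nhds (6 / Real.pi ^ 2)) := by
  set f : ℕ → ℕ → ℝ := fun N d => (μ d : ℝ) * ((N / d ^ 2 : ℕ) : ℝ) / N with hf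
  -- the tsum representation
  have key : ∀ N : ℕ, 1 ≤ N →
      ∑' d, f N d = (((Finset.Icc 1 N).filter Squarefree).card : ℝ) / N := by
    intro N hN
    have hsupp : ∀ d ∉ Finset.Icc 1 N, f N d = 0 := by
      intro d hd
      simp only [Finset.mem_Icc, not_and, not_le] at hd
      rcases Nat.eq_zero_or_pos d with rfl | hd1
      · simp [hf]
      · have hdN : N < d := hd hd1
        have : N / d ^ 2 = 0 := Nat.div_eq_of_lt (lt_of_lt_of_le hdN (Nat.le_self_pow two_ne_zero d))
        simp [hf, this]
    rw [tsum_eq_sum hsupp, hf, ← Finset.sum_div]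
    congr 1
    calc ∑ i ∈ Finset.Icc 1 N, (μ i : ℝ) * ((N / i ^ 2 : ℕ) : ℝ)
        = ((∑ d ∈ Finset.Icc 1 N, μ d * ((N / d ^ 2 : ℕ) : ℤ) : ℤ) : ℝ) := by
          rw [Int.cast_sum]
          refine Finset.sum_congr rfl fun d _ => ?_
          rw [Int.cast_mul, Int.cast_natCast]
      _ = (((Finset.Icc 1 N).filter Squarefree).card : ℝ) := by
          rw [← count_eq N]; simp
  -- dominated convergence
  have hbound : Summable (fun d : ℕ => 1 / (d : ℝ) ^ 2) :=
    Real.summable_one_div_nat_pow.mpr one_lt_two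
  have hpt : ∀ d : ℕ, Tendsto (fun N : ℕ => f N d) atTop (nhds ((μ d : ℝ) / (d : ℝ) ^ 2)) := by
    intro d
    rcases Nat.eq_zero_or_pos d with rfl | hd
    · simpa [hf] using tendsto_const_nhds
    · have hd2 : (0 : ℝ) < (d : ℝ) ^ 2 := by positivity
      have hratio : Tendsto (fun N : ℕ => ((N / d ^ 2 : ℕ) : ℝ) / N) atTop
          (nhds (1 / (d : ℝ) ^ 2)) := by
        have hlow : Tendsto (fun N : ℕ => 1 / (d : ℝ) ^ 2 - 1 / N) atTop
            (nhds (1 / (d : ℝ) ^ 2)) := by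
          have : Tendsto (fun n : ℕ => 1 / (n : ℝ)) atTop (nhds 0) := tendsto_one_div_atTop_nhds_zero_nat
          simpa using tendsto_const_nhds.sub this
        refine tendsto_of_tendsto_of_tendsto_of_le_of_le' hlow tendsto_const_nhds ?_ ?_
        · filter_upwards [eventually_ge_atTop 1] with N hN
          have hNpos : (0 : ℝ) < N := by exact_mod_cast hN
          have hltn : N < (N / d ^ 2 + 1) * d ^ 2 := by
            have h1 := Nat.div_add_mod N (d ^ 2)
            have h2 := Nat.mod_lt N (show 0 < d ^ 2 by positivity)
            calc N = d ^ 2 * (N / d ^ 2) + N % d ^ 2 := h1.symm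
              _ < d ^ 2 * (N / d ^ 2) + d ^ 2 := Nat.add_lt_add_left h2 _
              _ = (N / d ^ 2 + 1) * d ^ 2 := by ring
          have hlt : (N : ℝ) < ((N / d ^ 2 : ℕ) + 1) * (d : ℝ) ^ 2 := by
            exact_mod_cast hltn
          rw [le_div_iff₀ hNpos]
          have e : (1 / (d:ℝ)^2 - 1 / N) * N = (N:ℝ) / (d:ℝ)^2 - 1 := by
            field_simp
          rw [e, sub_le_iff_le_add, div_le_iff₀ hd2]
          linarith [hlt]
        · filter_upwards [eventually_ge_atTop 1] with N hN
          have hNpos : (0 : ℝ) < N := by exact_mod_cast hN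
          have hle : ((N / d ^ 2 : ℕ) : ℝ) ≤ (N : ℝ) / (d : ℝ) ^ 2 := by
            have := Nat.cast_div_le (α := ℝ) (m := N) (n := d ^ 2)
            push_cast at this
            exact this
          rw [div_le_div_iff₀ hNpos hd2]
          calc ((N / d ^ 2 : ℕ) : ℝ) * (d:ℝ) ^ 2 ≤ ((N:ℝ) / (d:ℝ)^2) * (d:ℝ)^2 := by
                exact mul_le_mul_of_nonneg_right hle (le_of_lt hd2)
            _ = (N : ℝ) := by field_simp
            _ = 1 * N := by ring
      have := hratio.const_mul ((μ d : ℝ))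
      simp only [hf]
      convert this using 2 with N
      · ring
      · ring
  have hdom : ∀ᶠ N in atTop, ∀ d : ℕ, ‖f N d‖ ≤ 1 / (d : ℝ) ^ 2 := by
    filter_upwards [eventually_ge_atTop 1] with N hN d
    rcases Nat.eq_zero_or_pos d with rfl | hd
    · simp [hf]
    · have hNpos : (0 : ℝ) < N := by exact_mod_cast hN
      have hd2 : (0 : ℝ) < (d : ℝ) ^ 2 := by positivity
      have hmu : |(μ d : ℝ)| ≤ 1 := by
        have := abs_moebius_le_one (n := d)
        exact_mod_cast this
      have hle : ((N / d ^ 2 : ℕ) : ℝ) ≤ (N : ℝ) / (d : ℝ) ^ 2 := by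
        have := Nat.cast_div_le (α := ℝ) (m := N) (n := d ^ 2)
        push_cast at this
        exact this
      rw [hf]
      simp only [Real.norm_eq_abs, abs_div, abs_mul, Nat.abs_cast]
      rw [div_le_div_iff₀ (by positivity) hd2]
      calc |(μ d : ℝ)| * ((N / d ^ 2 : ℕ) : ℝ) * (d:ℝ)^2
          ≤ 1 * ((N:ℝ) / (d:ℝ)^2) * (d:ℝ)^2 := by
            apply mul_le_mul_of_nonneg_right _ (le_of_lt hd2)
            exact mul_le_mul hmu hle (by positivity) zero_le_one
        _ = (N : ℝ) := by field_simp
        _ = 1 * (N : ℝ) := by ring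
  have hmain : Tendsto (fun N : ℕ => ∑' d, f N d) atTop (nhds (∑' d, (μ d : ℝ) / (d : ℝ) ^ 2)) :=
    tendsto_tsum_of_dominated_convergence hbound hpt hdom
  rw [mu_hasSum.tsum_eq] at hmain
  refine hmain.congr' ?_
  filter_upwards [eventually_ge_atTop 1] with N hN
  exact key N hN

end aux
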